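/- arXiv:1307.0094 — 2 statements merged into one kernel-verified Lean document; each statement's English description precedes it below -/
import Mathlib

section
/- In dimension d = 1, the generator S = (1/6) Σ_x (Y_x)² satisfies S p_x = (1/6) Δ(4 p_x + p_{x+1} + p_{x−1}), where Δ is the one-dimensional discrete Laplacian. -/
/-- Directional derivative of a function `F` on the one-dimensional
configuration space `ℝ^ℤ` along the direction `v`, at `p`. -/
noncomputable def dirDeriv1 (F : (ℤ → ℝ) → ℝ) (v p : ℤ → ℝ) : ℝ :=
  deriv (fun t : ℝ => F (fun y => p y + t * v y)) 0

/-- The tangent vector corresponding to the vector field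
`Y_x = (p_x − p_{x+1})∂_{p_{x−1}} + (p_{x+1} − p_{x−1})∂_{p_x} + (p_{x−1} − p_x)∂_{p_{x+1}}`. -/
def Yvec (x : ℤ) (p : ℤ → ℝ) : ℤ → ℝ := fun y =>
  if y = x - 1 then p x - p (x + 1)
  else if y = x then p (x + 1) - p (x - 1)
  else if y = x + 1 then p (x - 1) - p x
  else 0

/-- Action of `Y_x` on a function of the configuration. -/
noncomputable def Yop (x : ℤ) (F : (ℤ → ℝ) → ℝ) (p : ℤ → ℝ) : ℝ :=
  dirDeriv1 F (Yvec x p) p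

/-- The one-dimensional generator `S = (1/6) Σ_x (Y_x)²`. -/
noncomputable def Sgen1 (F : (ℤ → ℝ) → ℝ) (p : ℤ → ℝ) : ℝ :=
  (1 / 6) * ∑' x : ℤ, Yop x (Yop x F) p

lemma deriv_affine (c a : ℝ) : deriv (fun t : ℝ => c + t * a) 0 = a := by
  have h : HasDerivAt (fun t : ℝ => c + t * a) a 0 := by
    simpa using ((hasDerivAt_id (0 : ℝ)).mul_const a).const_add c
  exact h.deriv

lemma Yvec_linear (x : ℤ) (p v : ℤ → ℝ) (t : ℝ) (y : ℤ) :
    Yvec x (fun z => p z + t * v z) y = Yvec x p y + t * Yvec x v y := by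
  unfold Yvec
  split_ifs <;> ring

lemma Yop_coord (x x₀ : ℤ) (p : ℤ → ℝ) : Yop x (fun q => q x₀) p = Yvec x p x₀ := by
  unfold Yop dirDeriv1
  exact deriv_affine _ _

lemma Yop_Yvec (x x₀ : ℤ) (p : ℤ → ℝ) :
    Yop x (fun q => Yvec x q x₀) p = Yvec x (Yvec x p) x₀ := by
  unfold Yop dirDeriv1
  have : (fun t : ℝ => Yvec x (fun y => p y + t * Yvec x p y) x₀)
      = fun t : ℝ => Yvec x p x₀ + t * Yvec x (Yvec x p) x₀ := by
    funext t; exact Yvec_linear x p (Yvec x p) t x₀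
  rw [this, deriv_affine]

/-- In `d = 1`, the generator `S = (1/6) Σ_x (Y_x)²` satisfies
`S p_x = (1/6) Δ(4 p_x + p_{x+1} + p_{x−1})`. -/
theorem Sgen1_momentum (p : ℤ → ℝ) (x₀ : ℤ) :
    Sgen1 (fun p => p x₀) p =
      (1 / 6) * ((4 * p (x₀ + 1) + p (x₀ + 2) + p x₀)
        + (4 * p (x₀ - 1) + p x₀ + p (x₀ - 2))
        - 2 * (4 * p x₀ + p (x₀ + 1) + p (x₀ - 1))) := by
  unfold Sgen1
  have hterm : ∀ x : ℤ, Yop x (Yop x (fun q => q x₀)) p = Yvec x (Yvec x p) x₀ := by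
    intro x
    have : Yop x (fun q => q x₀) = fun q => Yvec x q x₀ := by
      funext q; exact Yop_coord x x₀ q
    rw [this, Yop_Yvec]
  have hsum : ∑' x : ℤ, Yop x (Yop x (fun q => q x₀)) p
      = ∑ x ∈ ({x₀ - 1, x₀, x₀ + 1} : Finset ℤ), Yvec x (Yvec x p) x₀ := by
    rw [show (fun x : ℤ => Yop x (Yop x (fun q => q x₀)) p)
        = fun x => Yvec x (Yvec x p) x₀ from funext hterm]
    apply tsum_eq_sum
    intro x hx
    simp only [Finset.mem_insert, Finset.mem_singleton] at hx
    push_neg at hx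
    unfold Yvec
    have h1 : x₀ ≠ x - 1 := by omega
    have h2 : x₀ ≠ x := by omega
    have h3 : x₀ ≠ x + 1 := by omega
    simp [h1, h2, h3]
  rw [hsum]
  have hne1 : x₀ - 1 ≠ x₀ := by omega
  have hne2 : x₀ - 1 ≠ x₀ + 1 := by omega
  have hne3 : x₀ ≠ x₀ + 1 := by omega
  rw [Finset.sum_insert (by simp [hne1, hne2]), Finset.sum_insert (by simp [hne3]),
    Finset.sum_singleton]
  unfold Yvec
  have e3 : x₀ - 1 - 1 = x₀ - 2 := by ring
  have e6 : x₀ + 1 + 1 = x₀ + 2 := by ring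
  simp only [e3, e6, sub_add_cancel, add_sub_cancel_right]
  split_ifs <;> first | (exfalso; omega) | ring
end

section
/- In dimension d ≥ 2, the generator S satisfies S(p_x²/2) = Δ(p_x²), i.e. the noise part of the dynamics satisfies a discrete diffusion equation for the kinetic energy: S e_x^{kin} = Δ p_x² where e_x^{kin} = p_x²/2. -/
open scoped BigOperators

/-- Canonical basis vector `e j` of `ℤ^d`. -/
def latE (d : ℕ) (j : Fin d) : Fin d → ℤ := fun i => if i = j then 1 else 0

/-- Directional derivative of a function `F` on configuration space
`(ℝ^d)^{ℤ^d}` along the (finitely supported) direction `v`, at `p`. -/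
noncomputable def dirDeriv {d : ℕ} (F : ((Fin d → ℤ) → Fin d → ℝ) → ℝ)
    (v p : (Fin d → ℤ) → Fin d → ℝ) : ℝ :=
  deriv (fun t : ℝ => F (fun y k => p y k + t * v y k)) 0

/-- The tangent vector corresponding to the vector field
`X^{i,j}_{x,z} = (p_z^j − p_x^j)(∂_{p_z^i} − ∂_{p_x^i}) − (p_z^i − p_x^i)(∂_{p_z^j} − ∂_{p_x^j})`. -/
def Xvec {d : ℕ} (i j : Fin d) (x z : Fin d → ℤ)
    (p : (Fin d → ℤ) → Fin d → ℝ) : (Fin d → ℤ) → Fin d → ℝ :=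
  fun y k =>
    (if y = z ∧ k = i then p z j - p x j else 0)
    - (if y = x ∧ k = i then p z j - p x j else 0)
    - (if y = z ∧ k = j then p z i - p x i else 0)
    + (if y = x ∧ k = j then p z i - p x i else 0)

/-- Action of `X^{i,j}_{x,z}` on a function of the configuration. -/
noncomputable def Xop {d : ℕ} (i j : Fin d) (x z : Fin d → ℤ)
    (F : ((Fin d → ℤ) → Fin d → ℝ) → ℝ) (p : (Fin d → ℤ) → Fin d → ℝ) : ℝ :=
  dirDeriv F (Xvec i j x z p) p

/-- The generator `S = (1/(2(d−1))) Σ_x Σ_{i,j,k} (X^{i,j}_{x,x+e_k})²`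
(equivalently `(1/(4(d−1))) Σ_{‖x−z‖=1} Σ_{i,j} (X^{i,j}_{x,z})²`), for `d ≥ 2`. -/
noncomputable def Sgen {d : ℕ} (F : ((Fin d → ℤ) → Fin d → ℝ) → ℝ)
    (p : (Fin d → ℤ) → Fin d → ℝ) : ℝ :=
  (1 / (2 * ((d : ℝ) - 1))) *
    ∑' x : Fin d → ℤ, ∑ i : Fin d, ∑ j : Fin d, ∑ k : Fin d,
      Xop i j x (x + latE d k) (Xop i j x (x + latE d k) F) p

section Aux

variable {d : ℕ}

lemma latE_inj : Function.Injective (latE d) := by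
  intro k m h
  by_contra hkm
  have := congrFun h k
  simp [latE, hkm] at this

lemma latE_ne_zero (k : Fin d) : latE d k ≠ 0 := by
  intro h
  have := congrFun h k
  simp [latE] at this

lemma self_ne_add_latE (x₀ : Fin d → ℤ) (k : Fin d) : x₀ ≠ x₀ + latE d k := by
  intro h
  exact latE_ne_zero k (left_eq_add.mp h)

lemma sub_latE_ne (x₀ : Fin d → ℤ) (m : Fin d) : x₀ ≠ x₀ - latE d m := by
  intro h
  exact latE_ne_zero m (sub_eq_self.mp h.symm)

lemma shift_eq_iff (x₀ : Fin d → ℤ) (m k : Fin d) :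
    x₀ - latE d m + latE d k = x₀ ↔ k = m := by
  rw [sub_add_eq_add_sub, add_sub_assoc, add_eq_left, sub_eq_zero]
  exact ⟨fun h => latE_inj h, fun h => by rw [h]⟩

lemma sub_latE_injective (x₀ : Fin d → ℤ) :
    Function.Injective (fun m : Fin d => x₀ - latE d m) := by
  intro a b h
  exact latE_inj (sub_right_injective h)

lemma dirDeriv_kin (x₀ : Fin d → ℤ) (v p : (Fin d → ℤ) → Fin d → ℝ) :
    dirDeriv (fun q => (∑ k : Fin d, q x₀ k ^ 2) / 2) v p = ∑ k : Fin d, p x₀ k * v x₀ k := by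
  unfold dirDeriv
  have h : HasDerivAt (fun t : ℝ => (∑ k : Fin d, (p x₀ k + t * v x₀ k) ^ 2) / 2)
      (∑ k : Fin d, p x₀ k * v x₀ k) 0 := by
    have h2 : HasDerivAt (fun t : ℝ => ∑ k : Fin d, (p x₀ k + t * v x₀ k) ^ 2)
        (∑ k : Fin d, 2 * (p x₀ k * v x₀ k)) 0 := by
      apply HasDerivAt.fun_sum
      intro k _
      have ha : HasDerivAt (fun t : ℝ => p x₀ k + t * v x₀ k) (v x₀ k) 0 := by
        simpa using ((hasDerivAt_id (0:ℝ)).mul_const (v x₀ k)).const_add (p x₀ k)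
      have := ha.fun_pow 2
      simpa [mul_comm, mul_assoc, mul_left_comm] using this
    have h3 := h2.div_const 2
    simpa [Finset.sum_div, mul_comm, mul_div_assoc] using h3
  exact h.deriv

lemma Xvec_lin (i j : Fin d) (x z : Fin d → ℤ) (p v : (Fin d → ℤ) → Fin d → ℝ)
    (t : ℝ) (y : Fin d → ℤ) (k : Fin d) :
    Xvec i j x z (fun y m => p y m + t * v y m) y k
      = Xvec i j x z p y k + t * Xvec i j x z v y k := by
  simp only [Xvec]
  split_ifs <;> ring

lemma dirDeriv_G (x₀ : Fin d → ℤ) (i j : Fin d) (x z : Fin d → ℤ)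
    (v p : (Fin d → ℤ) → Fin d → ℝ) :
    dirDeriv (fun q => ∑ k : Fin d, q x₀ k * Xvec i j x z q x₀ k) v p
      = ∑ k : Fin d, (v x₀ k * Xvec i j x z p x₀ k + p x₀ k * Xvec i j x z v x₀ k) := by
  unfold dirDeriv
  have hfun : (fun t : ℝ => ∑ k : Fin d,
      (p x₀ k + t * v x₀ k) * Xvec i j x z (fun y m => p y m + t * v y m) x₀ k)
      = fun t : ℝ => ∑ k : Fin d,
      (p x₀ k + t * v x₀ k) * (Xvec i j x z p x₀ k + t * Xvec i j x z v x₀ k) := by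
    funext t
    refine Finset.sum_congr rfl fun k _ => ?_
    rw [Xvec_lin]
  rw [show (fun t : ℝ => ∑ k : Fin d,
      (p x₀ k + t * v x₀ k) * Xvec i j x z (fun y m => p y m + t * v y m) x₀ k)
      = _ from hfun]
  have h : HasDerivAt (fun t : ℝ => ∑ k : Fin d,
      (p x₀ k + t * v x₀ k) * (Xvec i j x z p x₀ k + t * Xvec i j x z v x₀ k))
      (∑ k : Fin d, (v x₀ k * Xvec i j x z p x₀ k + p x₀ k * Xvec i j x z v x₀ k)) 0 := by
    apply HasDerivAt.fun_sum
    intro k _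
    have ha : HasDerivAt (fun t : ℝ => p x₀ k + t * v x₀ k) (v x₀ k) 0 := by
      simpa using ((hasDerivAt_id (0:ℝ)).mul_const (v x₀ k)).const_add (p x₀ k)
    have hb : HasDerivAt (fun t : ℝ => Xvec i j x z p x₀ k + t * Xvec i j x z v x₀ k)
        (Xvec i j x z v x₀ k) 0 := by
      simpa using ((hasDerivAt_id (0:ℝ)).mul_const (Xvec i j x z v x₀ k)).const_add
        (Xvec i j x z p x₀ k)
    have := ha.fun_mul hb
    simpa using this
  exact h.deriv

lemma Xop_Xop (x₀ : Fin d → ℤ) (i j : Fin d) (x z : Fin d → ℤ)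
    (p : (Fin d → ℤ) → Fin d → ℝ) :
    Xop i j x z (Xop i j x z (fun q => (∑ k : Fin d, q x₀ k ^ 2) / 2)) p
      = ∑ k : Fin d, (Xvec i j x z p x₀ k * Xvec i j x z p x₀ k
          + p x₀ k * Xvec i j x z (Xvec i j x z p) x₀ k) := by
  have hG : Xop i j x z (fun q => (∑ k : Fin d, q x₀ k ^ 2) / 2)
      = fun q => ∑ k : Fin d, q x₀ k * Xvec i j x z q x₀ k := by
    funext q
    exact dirDeriv_kin x₀ (Xvec i j x z q) q
  rw [show Xop i j x z (Xop i j x z (fun q => (∑ k : Fin d, q x₀ k ^ 2) / 2)) p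
      = Xop i j x z (fun q => ∑ k : Fin d, q x₀ k * Xvec i j x z q x₀ k) p from by rw [hG]]
  unfold Xop
  rw [dirDeriv_G]

lemma Xvec_diag (i : Fin d) (x z : Fin d → ℤ) (w : (Fin d → ℤ) → Fin d → ℝ)
    (y : Fin d → ℤ) (k : Fin d) : Xvec i i x z w y k = 0 := by
  simp only [Xvec]; split_ifs <;> ring

lemma XXF_none (x₀ : Fin d → ℤ) (i j : Fin d) (x z : Fin d → ℤ)
    (hx : x₀ ≠ x) (hz : x₀ ≠ z) (p : (Fin d → ℤ) → Fin d → ℝ) :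
    Xop i j x z (Xop i j x z (fun q => (∑ k : Fin d, q x₀ k ^ 2) / 2)) p = 0 := by
  rw [Xop_Xop]
  refine Finset.sum_eq_zero fun k _ => ?_
  have h : ∀ w : (Fin d → ℤ) → Fin d → ℝ, Xvec i j x z w x₀ k = 0 := by
    intro w; simp [Xvec, hx, hz]
  simp [h]

lemma XXF_x (x₀ : Fin d → ℤ) (i j : Fin d) (z : Fin d → ℤ) (hz : x₀ ≠ z)
    (p : (Fin d → ℤ) → Fin d → ℝ) :
    Xop i j x₀ z (Xop i j x₀ z (fun q => (∑ k : Fin d, q x₀ k ^ 2) / 2)) p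
      = if i = j then 0 else
        (p z i ^ 2 - p x₀ i ^ 2) + (p z j ^ 2 - p x₀ j ^ 2) := by
  rw [Xop_Xop]
  by_cases hij : i = j
  · subst hij
    simp [Xvec_diag]
  · simp only [if_neg hij]
    have key : ∀ k : Fin d,
        Xvec i j x₀ z p x₀ k * Xvec i j x₀ z p x₀ k
          + p x₀ k * Xvec i j x₀ z (Xvec i j x₀ z p) x₀ k
        = (if k = i then 2 * (p z i - p x₀ i) * p x₀ i + (p z j - p x₀ j) ^ 2 else 0)
          + (if k = j then 2 * (p z j - p x₀ j) * p x₀ j + (p z i - p x₀ i) ^ 2 else 0) := by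
      intro k
      by_cases hki : k = i <;> by_cases hkj : k = j
      · exact absurd (hki ▸ hkj) hij
      · subst hki
        simp [Xvec, hz, Ne.symm hz, hij, Ne.symm hij]
        ring
      · subst hkj
        simp [Xvec, hz, Ne.symm hz, hij, Ne.symm hij]
        ring
      · simp [Xvec, hki, hkj]
    rw [Finset.sum_congr rfl fun k _ => key k, Finset.sum_add_distrib,
      Finset.sum_ite_eq' Finset.univ i, Finset.sum_ite_eq' Finset.univ j]
    simp only [Finset.mem_univ, if_true]
    ring

lemma XXF_z (x₀ : Fin d → ℤ) (i j : Fin d) (x : Fin d → ℤ) (hx : x₀ ≠ x)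
    (p : (Fin d → ℤ) → Fin d → ℝ) :
    Xop i j x x₀ (Xop i j x x₀ (fun q => (∑ k : Fin d, q x₀ k ^ 2) / 2)) p
      = if i = j then 0 else
        (p x i ^ 2 - p x₀ i ^ 2) + (p x j ^ 2 - p x₀ j ^ 2) := by
  rw [Xop_Xop]
  by_cases hij : i = j
  · subst hij
    simp [Xvec_diag]
  · simp only [if_neg hij]
    have key : ∀ k : Fin d,
        Xvec i j x x₀ p x₀ k * Xvec i j x x₀ p x₀ k
          + p x₀ k * Xvec i j x x₀ (Xvec i j x x₀ p) x₀ k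
        = (if k = i then 2 * (p x i - p x₀ i) * p x₀ i + (p x₀ j - p x j) ^ 2 else 0)
          + (if k = j then 2 * (p x j - p x₀ j) * p x₀ j + (p x₀ i - p x i) ^ 2 else 0) := by
      intro k
      by_cases hki : k = i <;> by_cases hkj : k = j
      · exact absurd (hki ▸ hkj) hij
      · subst hki
        simp [Xvec, hx, Ne.symm hx, hij, Ne.symm hij]
        ring
      · subst hkj
        simp [Xvec, hx, Ne.symm hx, hij, Ne.symm hij]
        ring
      · simp [Xvec, hki, hkj]
    rw [Finset.sum_congr rfl fun k _ => key k, Finset.sum_add_distrib,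
      Finset.sum_ite_eq' Finset.univ i, Finset.sum_ite_eq' Finset.univ j]
    simp only [Finset.mem_univ, if_true]
    ring

lemma sum2 (g : Fin d → ℝ) :
    (∑ i : Fin d, ∑ j : Fin d, (if i = j then (0:ℝ) else g i + g j))
      = 2 * ((d:ℝ) - 1) * ∑ m : Fin d, g m := by
  have h1 : ∀ i : Fin d, (∑ j : Fin d, (if i = j then (0:ℝ) else g i + g j))
      = (d : ℝ) * g i + (∑ m : Fin d, g m) - 2 * g i := by
    intro i
    have : ∀ j : Fin d, (if i = j then (0:ℝ) else g i + g j)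
        = (g i + g j) - (if j = i then g i + g j else 0) := by
      intro j
      by_cases h : i = j
      · subst h; simp
      · simp [h, Ne.symm h]
    rw [Finset.sum_congr rfl fun j _ => this j, Finset.sum_sub_distrib,
      Finset.sum_add_distrib, Finset.sum_ite_eq' Finset.univ i]
    simp [Finset.card_univ, mul_comm]
    ring
  rw [Finset.sum_congr rfl fun i _ => h1 i]
  rw [Finset.sum_sub_distrib, Finset.sum_add_distrib]
  simp [Finset.sum_const, Finset.card_univ, ← Finset.mul_sum, ← Finset.sum_mul]
  ring

end Aux

/-- In `d ≥ 2`, the noise generator `S` satisfies `S(p_x²/2) = Δ(p_x²)`: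
a discrete diffusion equation for the kinetic energy `e_x^{kin} = p_x²/2`. -/
theorem Sgen_kinetic_energy (d : ℕ) (hd : 2 ≤ d) (p : (Fin d → ℤ) → Fin d → ℝ)
    (x₀ : Fin d → ℤ) :
    Sgen (fun p => (∑ k : Fin d, p x₀ k ^ 2) / 2) p =
      ∑ k : Fin d,
        ((∑ m : Fin d, p (x₀ + latE d k) m ^ 2)
          + (∑ m : Fin d, p (x₀ - latE d k) m ^ 2)
          - 2 * ∑ m : Fin d, p x₀ m ^ 2) := by
  have hd1 : ((d:ℝ) - 1) ≠ 0 := by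
    have h2 : (2:ℝ) ≤ (d:ℝ) := by exact_mod_cast hd
    linarith
  classical
  set F : ((Fin d → ℤ) → Fin d → ℝ) → ℝ := fun q => (∑ k : Fin d, q x₀ k ^ 2) / 2 with hF
  set f : (Fin d → ℤ) → ℝ := fun x => ∑ i : Fin d, ∑ j : Fin d, ∑ k : Fin d,
      Xop i j x (x + latE d k) (Xop i j x (x + latE d k) F) p with hf
  -- value at x₀
  have hval0 : f x₀ = ∑ k : Fin d, 2 * ((d:ℝ) - 1) *
      ((∑ m : Fin d, p (x₀ + latE d k) m ^ 2) - ∑ m : Fin d, p x₀ m ^ 2) := by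
    have step1 : f x₀ = ∑ i : Fin d, ∑ j : Fin d, ∑ k : Fin d,
        (if i = j then (0:ℝ) else
          (p (x₀ + latE d k) i ^ 2 - p x₀ i ^ 2) + (p (x₀ + latE d k) j ^ 2 - p x₀ j ^ 2)) := by
      refine Finset.sum_congr rfl fun i _ => Finset.sum_congr rfl fun j _ =>
        Finset.sum_congr rfl fun k _ => ?_
      exact XXF_x x₀ i j (x₀ + latE d k) (self_ne_add_latE x₀ k) p
    rw [step1]
    rw [show (∑ i : Fin d, ∑ j : Fin d, ∑ k : Fin d,
        (if i = j then (0:ℝ) else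
          (p (x₀ + latE d k) i ^ 2 - p x₀ i ^ 2) + (p (x₀ + latE d k) j ^ 2 - p x₀ j ^ 2)))
        = ∑ k : Fin d, ∑ i : Fin d, ∑ j : Fin d,
        (if i = j then (0:ℝ) else
          (p (x₀ + latE d k) i ^ 2 - p x₀ i ^ 2) + (p (x₀ + latE d k) j ^ 2 - p x₀ j ^ 2))
        from by
          rw [Finset.sum_congr rfl fun i _ => Finset.sum_comm]
          exact Finset.sum_comm]
    refine Finset.sum_congr rfl fun k _ => ?_
    rw [sum2 (fun m => p (x₀ + latE d k) m ^ 2 - p x₀ m ^ 2), Finset.sum_sub_distrib]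
  -- value at x₀ - e_m
  have hvalm : ∀ m : Fin d, f (x₀ - latE d m) = 2 * ((d:ℝ) - 1) *
      ((∑ m' : Fin d, p (x₀ - latE d m) m' ^ 2) - ∑ m' : Fin d, p x₀ m' ^ 2) := by
    intro m
    have step1 : f (x₀ - latE d m) = ∑ i : Fin d, ∑ j : Fin d,
        (if i = j then (0:ℝ) else
          (p (x₀ - latE d m) i ^ 2 - p x₀ i ^ 2) + (p (x₀ - latE d m) j ^ 2 - p x₀ j ^ 2)) := by
      refine Finset.sum_congr rfl fun i _ => Finset.sum_congr rfl fun j _ => ?_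
      have hk : ∀ k : Fin d,
          Xop i j (x₀ - latE d m) (x₀ - latE d m + latE d k)
            (Xop i j (x₀ - latE d m) (x₀ - latE d m + latE d k) F) p
          = (if k = m then (if i = j then (0:ℝ) else
              (p (x₀ - latE d m) i ^ 2 - p x₀ i ^ 2)
                + (p (x₀ - latE d m) j ^ 2 - p x₀ j ^ 2)) else 0) := by
        intro k
        by_cases hk : k = m
        · subst hk
          rw [if_pos rfl, show x₀ - latE d k + latE d k = x₀ from (shift_eq_iff x₀ k k).mpr rfl]
          exact XXF_z x₀ i j (x₀ - latE d k) (sub_latE_ne x₀ k) p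
        · rw [if_neg hk]
          refine XXF_none x₀ i j _ _ (sub_latE_ne x₀ m) ?_ p
          intro h
          exact hk ((shift_eq_iff x₀ m k).mp h.symm)
      rw [Finset.sum_congr rfl fun k _ => hk k, Finset.sum_ite_eq' Finset.univ m]
      simp
    rw [step1, sum2 (fun m' => p (x₀ - latE d m) m' ^ 2 - p x₀ m' ^ 2),
      Finset.sum_sub_distrib]
  -- support
  set s : Finset (Fin d → ℤ) :=
    insert x₀ (Finset.image (fun m : Fin d => x₀ - latE d m) Finset.univ) with hs
  have hsupp : ∀ x, x ∉ s → f x = 0 := by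
    intro x hx
    simp only [hs, Finset.mem_insert, Finset.mem_image, Finset.mem_univ, true_and,
      not_or, not_exists] at hx
    obtain ⟨hx0, hxm⟩ := hx
    refine Finset.sum_eq_zero fun i _ => Finset.sum_eq_zero fun j _ =>
      Finset.sum_eq_zero fun k _ => ?_
    refine XXF_none x₀ i j x (x + latE d k) (fun h => hx0 h.symm) ?_ p
    intro h
    exact hxm k (by rw [eq_sub_of_add_eq h.symm])
  have hx0nm : x₀ ∉ Finset.image (fun m : Fin d => x₀ - latE d m) Finset.univ := by
    simp only [Finset.mem_image, Finset.mem_univ, true_and, not_exists]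
    intro m h
    exact sub_latE_ne x₀ m h.symm
  have htsum : (∑' x : Fin d → ℤ, f x) = ∑ x ∈ s, f x := tsum_eq_sum hsupp
  have hsum : (∑ x ∈ s, f x) = f x₀ + ∑ m : Fin d, f (x₀ - latE d m) := by
    rw [hs, Finset.sum_insert hx0nm,
      Finset.sum_image (fun a _ b _ h => sub_latE_injective x₀ h)]
  -- put it together
  unfold Sgen
  rw [show (∑' x : Fin d → ℤ, ∑ i : Fin d, ∑ j : Fin d, ∑ k : Fin d,
      Xop i j x (x + latE d k) (Xop i j x (x + latE d k) F) p) = ∑' x : Fin d → ℤ, f x from rfl,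
    htsum, hsum, hval0]
  rw [Finset.sum_congr rfl fun m _ => hvalm m]
  rw [← Finset.sum_add_distrib, Finset.mul_sum]
  refine Finset.sum_congr rfl fun k _ => ?_
  field_simp
  ring
end
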